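/- arXiv:1005.3963 — 3 statements merged into one kernel-verified Lean document; each statement's English description precedes it below -/
import Mathlib

section
/- Let Ω ⊆ ℂ be an open set, let s : Ω → ℝ be a C² function, and let A₁, A₂ : Ω → ℂ be functions. Define A₃ := s_z (the Wirtinger z-derivative of s). Assume that at every point of Ω: (i) 0 < s ≤ 2; (ii) A₁² + A₂² + A₃² = 0 (the conformality relation); and (iii) Δs = 4(|A₁|² − |A₂|²) (equivalently ∂_z̄ A₃ = |A₁|² − |A₂|², the equation satisfied by the third coordinate of a conformal minimal immersion into Sol₃). Then the function φ := 1/s is subharmonic on Ω, i.e. Δ(1/s) ≥ 0 at every point of Ω. -/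
/-- The Wirtinger `z`-derivative `f_z = (∂f/∂x − i·∂f/∂y)/2` of a real-valued
function on `ℂ`, as a complex number. -/
noncomputable def wirtingerZ (f : ℂ → ℝ) (z : ℂ) : ℂ :=
  ((fderiv ℝ f z 1 : ℝ) - Complex.I * (fderiv ℝ f z Complex.I : ℝ)) / 2

/-- The Laplacian `Δf = ∂²f/∂x² + ∂²f/∂y²` of a real-valued function on `ℂ`. -/
noncomputable def lap (f : ℂ → ℝ) (z : ℂ) : ℝ :=
  fderiv ℝ (fun w => fderiv ℝ f w 1) z 1 +
    fderiv ℝ (fun w => fderiv ℝ f w Complex.I) z Complex.I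

/-- If `s` is `C²` on an open set `Ω ⊆ ℂ`, with `0 < s ≤ 2` on `Ω`, and if
`A₁, A₂, A₃ := s_z` satisfy the conformality relation `A₁² + A₂² + A₃² = 0` and
the minimal surface equation `Δs = 4(|A₁|² − |A₂|²)` on `Ω`, then `1/s` is
subharmonic on `Ω`: its Laplacian is nonnegative at every point of `Ω`. -/
theorem sol_inv_s_subharmonic (Ω : Set ℂ) (hΩ : IsOpen Ω)
    (s : ℂ → ℝ) (hs : ContDiffOn ℝ 2 s Ω)
    (A₁ A₂ A₃ : ℂ → ℂ) (hA₃ : ∀ z ∈ Ω, A₃ z = wirtingerZ s z)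
    (hs_pos : ∀ z ∈ Ω, 0 < s z) (hs_le : ∀ z ∈ Ω, s z ≤ 2)
    (hconf : ∀ z ∈ Ω, (A₁ z) ^ 2 + (A₂ z) ^ 2 + (A₃ z) ^ 2 = 0)
    (hmin : ∀ z ∈ Ω,
      lap s z = 4 * ((‖A₁ z‖) ^ 2 - (‖A₂ z‖) ^ 2)) :
    ∀ z ∈ Ω, 0 ≤ lap (fun w => 1 / s w) z := by
  intro z hz
  have hΩz : Ω ∈ nhds z := hΩ.mem_nhds hz
  have hdiff : ∀ w ∈ Ω, DifferentiableAt ℝ s w := fun w hw =>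
    (hs.differentiableOn (by simp)).differentiableAt (hΩ.mem_nhds hw)
  have hg : ContDiffOn ℝ 1 (fun w => fderiv ℝ s w) Ω :=
    hs.fderiv_of_isOpen hΩ (by norm_num)
  have hgz : DifferentiableAt ℝ (fun w => fderiv ℝ s w) z :=
    (hg.differentiableOn one_ne_zero).differentiableAt hΩz
  set a := s z with ha_def
  have ha : 0 < a := hs_pos z hz
  have hane : a ≠ 0 := ha.ne'
  -- the derivative of `1/s` on `Ω`
  have hfi : ∀ w ∈ Ω, fderiv ℝ (fun u => 1 / s u) w
      = (-(s w ^ 2)⁻¹) • fderiv ℝ s w := by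
    intro w hw
    have h1 : HasFDerivAt s (fderiv ℝ s w) w := (hdiff w hw).hasFDerivAt
    have h2 : HasFDerivAt (fun u => 1 / s u)
        ((-(s w ^ 2)⁻¹) • fderiv ℝ s w) w := by
      have := (hasDerivAt_inv (hs_pos w hw).ne').comp_hasFDerivAt w h1
      simpa [Function.comp_def, one_div] using this
    exact h2.fderiv
  have key : ∀ v : ℂ,
      fderiv ℝ (fun w => fderiv ℝ (fun u => 1 / s u) w v) z v =
        -(a ^ 2)⁻¹ * fderiv ℝ (fun w => fderiv ℝ s w v) z v
          + 2 * (a ^ 3)⁻¹ * (fderiv ℝ s z v) ^ 2 := by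
    intro v
    have hev : (fun w => fderiv ℝ (fun u => 1 / s u) w v)
        =ᶠ[nhds z] fun w => -((s w ^ 2)⁻¹) * fderiv ℝ s w v := by
      filter_upwards [hΩz] with w hw
      rw [hfi w hw]; simp
    have hp : HasFDerivAt s (fderiv ℝ s z) z := (hdiff z hz).hasFDerivAt
    have hpow : HasFDerivAt (fun w => s w ^ 2)
        (a • fderiv ℝ s z + a • fderiv ℝ s z) z := by
      simpa [pow_two, Pi.mul_def] using hp.mul hp
    have hq : HasFDerivAt (fun w => -((s w ^ 2)⁻¹))
        (-((-((a ^ 2) ^ 2)⁻¹) • (a • fderiv ℝ s z + a • fderiv ℝ s z))) z := by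
      have := ((hasDerivAt_inv (pow_ne_zero 2 hane)).comp_hasFDerivAt z hpow).neg
      simpa [Function.comp_def, Pi.neg_def] using this
    have hr : HasFDerivAt (fun w => fderiv ℝ s w v)
        ((ContinuousLinearMap.apply ℝ ℝ v).comp
          (fderiv ℝ (fun w => fderiv ℝ s w) z)) z :=
      (ContinuousLinearMap.apply ℝ ℝ v).hasFDerivAt.comp z hgz.hasFDerivAt
    have hmul : HasFDerivAt (fun w => -((s w ^ 2)⁻¹) * fderiv ℝ s w v) _ z := hq.mul hr
    rw [hev.fderiv_eq, hmul.fderiv, hr.fderiv]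
    simp only [ContinuousLinearMap.add_apply, ContinuousLinearMap.smul_apply,
      ContinuousLinearMap.neg_apply, ContinuousLinearMap.coe_comp',
      Function.comp_apply, ContinuousLinearMap.apply_apply, smul_eq_mul]
    rw [← ha_def]
    field_simp
    ring
  have hlap : lap (fun w => 1 / s w) z =
      -(a ^ 2)⁻¹ * lap s z
        + 2 * (a ^ 3)⁻¹ * ((fderiv ℝ s z 1) ^ 2 + (fderiv ℝ s z Complex.I) ^ 2) := by
    rw [lap, lap, key 1, key Complex.I]; ring
  have hA3 : ((fderiv ℝ s z 1) ^ 2 + (fderiv ℝ s z Complex.I) ^ 2)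
      = 4 * (‖A₃ z‖) ^ 2 := by
    rw [hA₃ z hz, wirtingerZ, Complex.sq_norm]
    simp [Complex.normSq_apply, Complex.div_re, Complex.div_im, Complex.normSq_apply]
    ring
  have h12 : (‖A₁ z‖) ^ 2 - (‖A₂ z‖) ^ 2
      ≤ (‖A₃ z‖) ^ 2 := by
    have h : (A₁ z) ^ 2 = -(A₃ z ^ 2) + -(A₂ z ^ 2) := by
      linear_combination hconf z hz
    have h4 := norm_add_le (-(A₃ z ^ 2)) (-(A₂ z ^ 2))
    rw [← h, norm_neg, norm_neg,
      norm_pow, norm_pow, norm_pow] at h4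
    linarith
  have ht : (0:ℝ) ≤ (‖A₃ z‖) ^ 2 := sq_nonneg _
  rw [hlap, hmin z hz, hA3]
  have key2 : -(a ^ 2)⁻¹ * (4 * ((‖A₁ z‖) ^ 2 - (‖A₂ z‖) ^ 2))
      + 2 * (a ^ 3)⁻¹ * (4 * (‖A₃ z‖) ^ 2)
      = (8 * (‖A₃ z‖) ^ 2
          - 4 * a * ((‖A₁ z‖) ^ 2 - (‖A₂ z‖) ^ 2)) / a ^ 3 := by
    field_simp; ring
  rw [key2]
  apply div_nonneg _ (le_of_lt (pow_pos ha 3))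
  nlinarith [mul_nonneg (sub_nonneg.2 (hs_le z hz)) ht,
    mul_nonneg ha.le (sub_nonneg.2 h12)]
end

section
/- Let Ω ⊆ ℂ be an open set, let y : Ω → ℝ be a C² function, and let A₂, A₃ : Ω → ℂ be functions. Define A₁ := y_z (the Wirtinger z-derivative of y). Assume that at every point of Ω: (i) 0 < y ≤ 4; (ii) A₁² + A₂² + A₃² = 0 (the conformality relation); and (iii) Δy = −2(conj(A₂)·A₃ + A₂·conj(A₃)) (equivalently ∂_z̄ A₁ = −(conj(A₂)·A₃ + A₂·conj(A₃))/2, the equation satisfied by the first coordinate of a conformal minimal immersion into Nil₃ in the coordinates (y₁,y₂,y₃)). Then the function φ := 1/y is subharmonic on Ω, i.e. Δ(1/y) ≥ 0 at every point of Ω. -/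
open Complex ContinuousLinearMap in
/-- Second directional derivative of `1/y` in terms of those of `y`. -/
lemma second_deriv_inv_aux (Ω : Set ℂ) (hΩ : IsOpen Ω) (y : ℂ → ℝ)
    (hy : ContDiffOn ℝ 2 y Ω) (hy0 : ∀ w ∈ Ω, y w ≠ 0)
    {z : ℂ} (hz : z ∈ Ω) (e : ℂ) :
    fderiv ℝ (fun w => fderiv ℝ (fun t => 1 / y t) w e) z e
      = -(fderiv ℝ (fun w => fderiv ℝ y w e) z e) / (y z) ^ 2
        + 2 * (fderiv ℝ y z e) ^ 2 / (y z) ^ 3 := by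
  have hct : ∀ w ∈ Ω, ContDiffAt ℝ 2 y w := fun w hw => hy.contDiffAt (hΩ.mem_nhds hw)
  have hdy : ∀ w ∈ Ω, HasFDerivAt y (fderiv ℝ y w) w := fun w hw =>
    (((hct w hw).differentiableAt (by norm_num))).hasFDerivAt
  have key : ∀ w ∈ Ω, fderiv ℝ (fun t => 1 / y t) w e
      = -((y w) ^ 2)⁻¹ * fderiv ℝ y w e := by
    intro w hw
    have hinv : HasFDerivAt (fun t => 1 / y t)
        ((smulRight (1 : ℝ →L[ℝ] ℝ) (-((y w) ^ 2)⁻¹)).comp (fderiv ℝ y w)) w := by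
      have h := (hasFDerivAt_inv (hy0 w hw)).comp w (hdy w hw)
      simp only [one_div]
      exact h.congr_fderiv (by ext v; simp)
    rw [hinv.fderiv]
    simp [mul_comm]
  have hEq : (fun w => fderiv ℝ (fun t => 1 / y t) w e)
      =ᶠ[nhds z] (fun w => -((y w) ^ 2)⁻¹ * fderiv ℝ y w e) := by
    filter_upwards [hΩ.mem_nhds hz] with w hw using key w hw
  rw [hEq.fderiv_eq]
  -- second derivative data
  have hfd1 : ContDiffAt ℝ 1 (fderiv ℝ y) z :=
    (hct z hz).fderiv_right (by norm_num)
  have hF : HasFDerivAt (fderiv ℝ y) (fderiv ℝ (fderiv ℝ y) z) z :=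
    (hfd1.differentiableAt one_ne_zero).hasFDerivAt
  have hu : HasFDerivAt (fun w => fderiv ℝ y w e)
      ((ContinuousLinearMap.apply ℝ ℝ e).comp (fderiv ℝ (fderiv ℝ y) z)) z :=
    (ContinuousLinearMap.apply ℝ ℝ e).hasFDerivAt.comp z hF
  set c := y z with hc
  have hy' : HasFDerivAt y (fderiv ℝ y z) z := hdy z hz
  have hsq : HasFDerivAt (fun w => (y w) ^ 2)
      ((2 * c) • fderiv ℝ y z) z := by
    have := hy'.mul hy'
    have h2 : (fun w => (y w) ^ 2) = fun w => y w * y w := by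
      funext w; ring
    rw [h2]
    exact this.congr_fderiv (by
      ext v
      simp only [ContinuousLinearMap.add_apply, ContinuousLinearMap.smul_apply, smul_eq_mul, hc]; ring)
  have hinv2 : HasFDerivAt (fun w => ((y w) ^ 2)⁻¹)
      ((smulRight (1 : ℝ →L[ℝ] ℝ) (-((c ^ 2) ^ 2)⁻¹)).comp ((2 * c) • fderiv ℝ y z)) z := by
    exact (hasFDerivAt_inv (pow_ne_zero 2 (hy0 z hz))).comp z hsq
  have hprod : HasFDerivAt (fun w => -(((y w) ^ 2)⁻¹ * fderiv ℝ y w e))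
      (-( (c ^ 2)⁻¹ • ((ContinuousLinearMap.apply ℝ ℝ e).comp (fderiv ℝ (fderiv ℝ y) z))
        + (fderiv ℝ y z e) •
          ((smulRight (1 : ℝ →L[ℝ] ℝ) (-((c ^ 2) ^ 2)⁻¹)).comp ((2 * c) • fderiv ℝ y z)))) z :=
    (hinv2.mul hu).neg
  have hgoal : (fun w => -((y w) ^ 2)⁻¹ * fderiv ℝ y w e)
      = fun w => -(((y w) ^ 2)⁻¹ * fderiv ℝ y w e) := by
    funext w; ring
  rw [hgoal, hprod.fderiv]
  have hue : fderiv ℝ (fun w => fderiv ℝ y w e) z e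
      = ((ContinuousLinearMap.apply ℝ ℝ e).comp (fderiv ℝ (fderiv ℝ y) z)) e := by
    rw [hu.fderiv]
  rw [hue]
  have hc0 : c ≠ 0 := hy0 z hz
  simp only [ContinuousLinearMap.neg_apply, ContinuousLinearMap.add_apply,
    ContinuousLinearMap.smul_apply, ContinuousLinearMap.comp_apply,
    ContinuousLinearMap.smulRight_apply, ContinuousLinearMap.one_apply,
    ContinuousLinearMap.apply_apply, smul_eq_mul]
  field_simp
  ring

/-- If `y` is `C²` on an open set `Ω ⊆ ℂ`, with `0 < y ≤ 4` on `Ω`, and if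
`A₁ := y_z, A₂, A₃` satisfy the conformality relation `A₁² + A₂² + A₃² = 0` and
the minimal surface equation `Δy = −2(conj(A₂)·A₃ + A₂·conj(A₃))` on `Ω`, then
`1/y` is subharmonic on `Ω`: its Laplacian is nonnegative at every point of `Ω`. -/
theorem nil_inv_y_subharmonic (Ω : Set ℂ) (hΩ : IsOpen Ω)
    (y : ℂ → ℝ) (hy : ContDiffOn ℝ 2 y Ω)
    (A₁ A₂ A₃ : ℂ → ℂ) (hA₁ : ∀ z ∈ Ω, A₁ z = wirtingerZ y z)
    (hy_pos : ∀ z ∈ Ω, 0 < y z) (hy_le : ∀ z ∈ Ω, y z ≤ 4)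
    (hconf : ∀ z ∈ Ω, (A₁ z) ^ 2 + (A₂ z) ^ 2 + (A₃ z) ^ 2 = 0)
    (hmin : ∀ z ∈ Ω, (lap y z : ℂ) =
      -2 * ((starRingEnd ℂ) (A₂ z) * A₃ z + A₂ z * (starRingEnd ℂ) (A₃ z))) :
    ∀ z ∈ Ω, 0 ≤ lap (fun w => 1 / y w) z := by
  intro z hz
  have hy0 : ∀ w ∈ Ω, y w ≠ 0 := fun w hw => (hy_pos w hw).ne'
  have h1 := second_deriv_inv_aux Ω hΩ y hy hy0 hz 1
  have hI := second_deriv_inv_aux Ω hΩ y hy hy0 hz Complex.I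
  have hlap : lap (fun w => 1 / y w) z
      = -(lap y z) / (y z) ^ 2
        + 2 * ((fderiv ℝ y z 1) ^ 2 + (fderiv ℝ y z Complex.I) ^ 2) / (y z) ^ 3 := by
    simp only [lap, one_div] at h1 hI ⊢
    rw [h1, hI]
    ring
  set c := y z with hcdef
  have hc : 0 < c := hy_pos z hz
  have hc4 : c ≤ 4 := hy_le z hz
  set a := fderiv ℝ y z 1 with ha
  set b := fderiv ℝ y z Complex.I with hb
  -- ρ and m
  set ρ : ℝ := ((starRingEnd ℂ) (A₂ z) * A₃ z).re with hρ
  set m : ℝ := ‖(A₂ z) ^ 2 + (A₃ z) ^ 2‖ with hm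
  have hm0 : 0 ≤ m := norm_nonneg _
  -- Laplacian of y = -4ρ
  have hL : lap y z = -4 * ρ := by
    have h := hmin z hz
    have h2 : (starRingEnd ℂ) (A₂ z) * A₃ z + A₂ z * (starRingEnd ℂ) (A₃ z)
        = ((2 * ρ : ℝ) : ℂ) := by
      have : A₂ z * (starRingEnd ℂ) (A₃ z)
          = (starRingEnd ℂ) ((starRingEnd ℂ) (A₂ z) * A₃ z) := by
        simp [mul_comm]
      rw [this, Complex.add_conj]
    rw [h2] at h
    have : (lap y z : ℂ) = ((-4 * ρ : ℝ) : ℂ) := by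
      rw [h]; push_cast; ring
    exact_mod_cast this
  -- |A₁|² = (a²+b²)/4
  have hA1sq : ‖A₁ z‖ ^ 2 = (a ^ 2 + b ^ 2) / 4 := by
    rw [hA₁ z hz, Complex.sq_norm, wirtingerZ]
    simp [Complex.normSq_apply, Complex.div_re, Complex.div_im, Complex.normSq_apply]
    ring
  -- a²+b² = 4m
  have hab : a ^ 2 + b ^ 2 = 4 * m := by
    have hcf : (A₁ z) ^ 2 = -((A₂ z) ^ 2 + (A₃ z) ^ 2) := by
      have := hconf z hz; linear_combination this
    have : ‖A₁ z‖ ^ 2 = m := by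
      rw [← norm_pow, hcf, norm_neg]
    rw [hA1sq] at this
    linarith
  -- m² - 4ρ² = (normSq A₂ - normSq A₃)² ≥ 0
  have hmsq : 4 * ρ ^ 2 ≤ m ^ 2 := by
    have hms : m ^ 2 = Complex.normSq ((A₂ z) ^ 2 + (A₃ z) ^ 2) := Complex.sq_norm _
    have key : m ^ 2 - 4 * ρ ^ 2
        = (Complex.normSq (A₂ z) - Complex.normSq (A₃ z)) ^ 2 := by
      rw [hms, hρ]
      simp only [Complex.normSq_apply, pow_two, Complex.add_re, Complex.add_im,
        Complex.mul_re, Complex.mul_im, Complex.conj_re, Complex.conj_im]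
      ring
    nlinarith [sq_nonneg (Complex.normSq (A₂ z) - Complex.normSq (A₃ z))]
  have hρm : -2 * ρ ≤ m := by nlinarith
  -- conclude
  rw [hlap, hL, hab]
  have hnum : 0 ≤ 4 * ρ * c + 8 * m := by
    rcases le_or_gt 0 ρ with h | h
    · nlinarith
    · nlinarith
  have heq : -(-4 * ρ) / c ^ 2 + 2 * (4 * m) / c ^ 3 = (4 * ρ * c + 8 * m) / c ^ 3 := by
    field_simp; ring
  rw [heq]
  positivity
end

section
/- Let A₁, A₂, A₃ be complex numbers satisfying A₁² + A₂² + A₃² = 0, and let y be a real number with 0 < y ≤ 4. Then 4|A₁|² + 2y·Re(conj(A₂)·A₃) ≥ 0. -/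
/-- Key algebraic inequality: `2|Re(conj A₂ · A₃)| ≤ |A₂² + A₃²|`. -/
lemma key_ineq (A₂ A₃ : ℂ) :
    2 * |((starRingEnd ℂ) A₂ * A₃).re| ≤ ‖A₂ ^ 2 + A₃ ^ 2‖ := by
  rw [Complex.norm_def, Real.le_sqrt (by positivity)]
  have h : Complex.normSq (A₂ ^ 2 + A₃ ^ 2) =
      (A₂.re^2 + A₂.im^2 + A₃.re^2 + A₃.im^2)^2
        - 4 * (A₂.re * A₃.im - A₂.im * A₃.re)^2 := by
    simp [Complex.normSq_apply, Complex.add_re, Complex.add_im, Complex.sq_norm, pow_two,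
      Complex.mul_re, Complex.mul_im]
    ring
  have hre : ((starRingEnd ℂ) A₂ * A₃).re = A₂.re * A₃.re + A₂.im * A₃.im := by
    simp [Complex.mul_re]
  rw [mul_pow, sq_abs, h, hre]
  nlinarith [sq_nonneg (A₂.re * A₃.re + A₂.im * A₃.im), sq_nonneg (A₂.re^2 + A₂.im^2 - A₃.re^2 - A₃.im^2), sq_nonneg (A₂.re*A₃.im - A₂.im*A₃.re)]
  exact Complex.normSq_nonneg _

/-- If complex numbers `A₁, A₂, A₃` satisfy the conformality relation
`A₁² + A₂² + A₃² = 0` and `0 < y ≤ 4`, then `4|A₁|² + 2y·Re(conj(A₂)·A₃) ≥ 0`. -/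
theorem nil_subharmonicity_algebraic (A₁ A₂ A₃ : ℂ) (y : ℝ)
    (hconf : A₁ ^ 2 + A₂ ^ 2 + A₃ ^ 2 = 0)
    (hy_pos : 0 < y) (hy_le : y ≤ 4) :
    0 ≤ 4 * ‖A₁‖ ^ 2 + 2 * y * ((starRingEnd ℂ) A₂ * A₃).re := by
  have h1 : ‖A₁‖ ^ 2 = ‖A₂ ^ 2 + A₃ ^ 2‖ := by
    rw [← norm_pow]
    have : A₁ ^ 2 = -(A₂ ^ 2 + A₃ ^ 2) := by linear_combination hconf
    rw [this, norm_neg]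
  have hk := key_ineq A₂ A₃
  set p := ((starRingEnd ℂ) A₂ * A₃).re with hp
  rcases le_or_gt 0 p with h | h
  · nlinarith [norm_nonneg (A₂ ^ 2 + A₃ ^ 2)]
  · have : |p| = -p := abs_of_neg h
    nlinarith
end
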